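/- Define g₁ : [0, π) → ℝ by g₁(0) = 1/4 and g₁(x) = (cosh(x/2) - cos(x/2))/x² for x ≠ 0, so that g₁(x) = Σ_{k=0}^{∞} a_k x^{4k} with a_k = 1/(2^{4k+1}(4k+2)!). For n ∈ ℕ let T_{4n}(x) = Σ_{k=0}^{n} a_k x^{4k}, and for c ∈ (0, π) and m ≥ 1 let 𝕋_{4m}(x) = Σ_{k=0}^{m-1} a_k x^{4k} + (g₁(c) - Σ_{k=0}^{m-1} a_k c^{4k})·(x/c)^{4m}, with 𝕋_0(x) = g₁(c). Then for every c ∈ (0, π), every x ∈ (0, c), and all m, n ∈ ℕ: 1/4 = T_0(x) ≤ T_{4n}(x) ≤ T_{4n+4}(x) ≤ g₁(x) ≤ 𝕋_{4m+4}(x) ≤ 𝕋_{4m}(x) ≤ 𝕋_0(x) = g₁(c). -/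

import Mathlib

open Real Set

noncomputable def g1 (x : ℝ) : ℝ :=
  if x = 0 then 1 / 4 else (Real.cosh (x / 2) - Real.cos (x / 2)) / x ^ 2

/-- Maclaurin coefficients of `g₁`: `a_k = 1/(2^{4k+1}(4k+2)!)`. -/
noncomputable def acoef (k : ℕ) : ℝ := 1 / (2 ^ (4 * k + 1) * (Nat.factorial (4 * k + 2) : ℝ))

/-- First Taylor approximation `T_{4n}(x) = Σ_{k=0}^n a_k x^{4k}`. -/
noncomputable def T (n : ℕ) (x : ℝ) : ℝ := ∑ k ∈ Finset.range (n + 1), acoef k * x ^ (4 * k)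

/-- Second Taylor approximation `𝕋_{4m}(x) = Σ_{k=0}^{m-1} a_k x^{4k} +
(g₁(c) - Σ_{k=0}^{m-1} a_k c^{4k})·(x/c)^{4m}`, with `𝕋_0(x) = g₁(c)`
(the formula specializes to this at `m = 0`). -/
noncomputable def TT (c : ℝ) (m : ℕ) (x : ℝ) : ℝ :=
  (∑ k ∈ Finset.range m, acoef k * x ^ (4 * k)) +
    (g1 c - ∑ k ∈ Finset.range m, acoef k * c ^ (4 * k)) * (x / c) ^ (4 * m)

lemma acoef_nonneg (k : ℕ) : 0 ≤ acoef k := by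
  unfold acoef; positivity

lemma term_nonneg (k : ℕ) (x : ℝ) : 0 ≤ acoef k * x ^ (4 * k) :=
  mul_nonneg (acoef_nonneg k) (Even.pow_nonneg ⟨2 * k, by ring⟩ x)

lemma summable_even (t : ℝ) : Summable (fun n : ℕ => |t| ^ (2 * n) / ((2 * n).factorial : ℝ)) := by
  have h := (Real.summable_pow_div_factorial |t|).comp_injective
    (fun a b h => by dsimp at h; omega : Function.Injective (fun n : ℕ => 2 * n))
  exact h

lemma summable_g1 (x : ℝ) : Summable (fun k : ℕ => acoef k * x ^ (4 * k)) := by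
  have h4 : Summable (fun k : ℕ => |x| ^ (4 * k) / ((4 * k).factorial : ℝ)) :=
    (Real.summable_pow_div_factorial |x|).comp_injective
      (fun a b h => by dsimp at h; omega : Function.Injective (fun n : ℕ => 4 * n))
  refine Summable.of_nonneg_of_le (fun k => term_nonneg k x) (fun k => ?_) h4
  have hxe : x ^ (4 * k) = |x| ^ (4 * k) := by
    rw [← abs_pow, abs_of_nonneg (Even.pow_nonneg ⟨2 * k, by ring⟩ x)]
  rw [hxe, acoef, div_mul_eq_mul_div, one_mul]
  apply div_le_div_of_nonneg_left (by positivity) (by positivity)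
  calc ((4 * k).factorial : ℝ) ≤ ((4 * k + 2).factorial : ℝ) := by
        exact_mod_cast Nat.factorial_le (by omega)
    _ ≤ 2 ^ (4 * k + 1) * ((4 * k + 2).factorial : ℝ) :=
        le_mul_of_one_le_left (by positivity) (one_le_pow₀ (by norm_num))

lemma g1_eq_tsum (x : ℝ) (hx : x ≠ 0) : g1 x = ∑' k : ℕ, acoef k * x ^ (4 * k) := by
  set t := x / 2 with ht
  have hfact : ∀ n : ℕ, (0:ℝ) < ((2 * n).factorial : ℝ) := fun n => by positivity
  have s1 : Summable (fun n : ℕ => t ^ (2 * n) / ((2 * n).factorial : ℝ)) := by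
    refine (summable_even t).of_norm_bounded (fun n => ?_)
    rw [norm_div, norm_pow, Real.norm_eq_abs, Real.norm_eq_abs,
      abs_of_pos (hfact n)]
  have s2 : Summable (fun n : ℕ => (-1) ^ n * t ^ (2 * n) / ((2 * n).factorial : ℝ)) := by
    refine (summable_even t).of_norm_bounded (fun n => ?_)
    rw [norm_div, norm_mul, norm_pow, norm_pow, Real.norm_eq_abs, Real.norm_eq_abs,
      Real.norm_eq_abs, abs_of_pos (hfact n)]
    simp
  have hsub : Real.cosh t - Real.cos t
      = ∑' n : ℕ, (t ^ (2 * n) / ((2 * n).factorial : ℝ)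
        - (-1) ^ n * t ^ (2 * n) / ((2 * n).factorial : ℝ)) := by
    rw [Real.cosh_eq_tsum, Real.cos_eq_tsum, Summable.tsum_sub s1 s2]
  set F : ℕ → ℝ := fun n => t ^ (2 * n) / ((2 * n).factorial : ℝ)
    - (-1) ^ n * t ^ (2 * n) / ((2 * n).factorial : ℝ) with hF
  have sF : Summable F := s1.sub s2
  have heo : (∑' k : ℕ, F (2 * k)) + ∑' k : ℕ, F (2 * k + 1) = ∑' n : ℕ, F n :=
    tsum_even_add_odd (sF.comp_injective (mul_right_injective₀ (by norm_num : (2:ℕ) ≠ 0)))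
      (sF.comp_injective (fun a b h => by omega))
  have hev : ∀ k : ℕ, F (2 * k) = 0 := by
    intro k
    simp only [hF, pow_mul, neg_one_sq, one_pow, one_mul]
    ring
  have hod : ∀ k : ℕ, F (2 * k + 1) = 2 * t ^ (4 * k + 2) / ((4 * k + 2).factorial : ℝ) := by
    intro k
    have h1 : 2 * (2 * k + 1) = 4 * k + 2 := by ring
    have h2 : ((-1 : ℝ)) ^ (2 * k + 1) = -1 := by
      rw [pow_succ, pow_mul]; norm_num
    simp only [hF, h1, h2]
    ring
  have hFsum : ∑' n : ℕ, F n = ∑' k : ℕ, 2 * t ^ (4 * k + 2) / ((4 * k + 2).factorial : ℝ) := by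
    rw [← heo]
    simp only [hev, hod, tsum_zero, zero_add]
  have : g1 x = (∑' k : ℕ, 2 * t ^ (4 * k + 2) / ((4 * k + 2).factorial : ℝ)) / x ^ 2 := by
    rw [g1, if_neg hx, hsub, hFsum]
  rw [this, ← tsum_div_const]
  refine tsum_congr (fun k => ?_)
  have hfk : ((4 * k + 2).factorial : ℝ) ≠ 0 := by positivity
  rw [ht, div_pow, acoef]
  field_simp
  ring

lemma g1_tail (c : ℝ) (hc : c ≠ 0) (m : ℕ) :
    g1 c - ∑ k ∈ Finset.range m, acoef k * c ^ (4 * k)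
      = ∑' i : ℕ, acoef (i + m) * c ^ (4 * (i + m)) := by
  rw [g1_eq_tsum c hc, ← Summable.sum_add_tsum_nat_add m (summable_g1 c)]
  ring

lemma tail_nonneg (c : ℝ) (hc : c ≠ 0) (m : ℕ) :
    0 ≤ g1 c - ∑ k ∈ Finset.range m, acoef k * c ^ (4 * k) := by
  rw [g1_tail c hc m]
  exact tsum_nonneg (fun i => term_nonneg _ _)

lemma g1_le_TT (c x : ℝ) (hc : 0 < c) (hx0 : 0 < x) (hxc : x ≤ c) (m : ℕ) :
    g1 x ≤ TT c m x := by
  rw [TT, g1_eq_tsum x hx0.ne', ← Summable.sum_add_tsum_nat_add m (summable_g1 x),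
    g1_tail c hc.ne' m, ← tsum_mul_right]
  refine add_le_add (le_refl _) ?_
  have hsx : Summable (fun i : ℕ => acoef (i + m) * x ^ (4 * (i + m))) :=
    (summable_nat_add_iff (f := fun k : ℕ => acoef k * x ^ (4 * k)) m).2 (summable_g1 x)
  have hsc : Summable (fun i : ℕ => acoef (i + m) * c ^ (4 * (i + m))) :=
    (summable_nat_add_iff (f := fun k : ℕ => acoef k * c ^ (4 * k)) m).2 (summable_g1 c)
  refine hsx.tsum_le_tsum (fun i => ?_) (hsc.mul_right _)
  calc acoef (i + m) * x ^ (4 * (i + m))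
      = acoef (i + m) * x ^ (4 * i) * x ^ (4 * m) := by ring
    _ ≤ acoef (i + m) * c ^ (4 * i) * x ^ (4 * m) := by
        have := pow_le_pow_left₀ hx0.le hxc (4 * i)
        have hx4 : (0:ℝ) ≤ x ^ (4 * m) := by positivity
        nlinarith [acoef_nonneg (i + m), mul_le_mul_of_nonneg_left this (acoef_nonneg (i + m))]
    _ = acoef (i + m) * c ^ (4 * (i + m)) * (x / c) ^ (4 * m) := by
        rw [div_pow]
        field_simp
        ring

lemma TT_succ_le (c x : ℝ) (hc : 0 < c) (hx0 : 0 < x) (hxc : x ≤ c) (m : ℕ) :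
    TT c (m + 1) x ≤ TT c m x := by
  have hq0 : 0 ≤ x / c := by positivity
  have hq1 : x / c ≤ 1 := (div_le_one hc).2 hxc
  have h2 : (x / c) ^ (4 * (m + 1)) ≤ (x / c) ^ (4 * m) :=
    pow_le_pow_of_le_one hq0 hq1 (by omega)
  have key : acoef m * c ^ (4 * m) * (x / c) ^ (4 * m) = acoef m * x ^ (4 * m) := by
    rw [div_pow]; field_simp
  have hG1 : 0 ≤ g1 c - (∑ k ∈ Finset.range m, acoef k * c ^ (4 * k)
      + acoef m * c ^ (4 * m)) := by
    have := tail_nonneg c hc.ne' (m + 1)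
    rwa [Finset.sum_range_succ] at this
  have hmono : (g1 c - (∑ k ∈ Finset.range m, acoef k * c ^ (4 * k)
        + acoef m * c ^ (4 * m))) * (x / c) ^ (4 * (m + 1))
      ≤ (g1 c - (∑ k ∈ Finset.range m, acoef k * c ^ (4 * k)
        + acoef m * c ^ (4 * m))) * (x / c) ^ (4 * m) :=
    mul_le_mul_of_nonneg_left h2 hG1
  simp only [TT, Finset.sum_range_succ]
  nlinarith [hmono, key]

lemma TT_le_zero (c x : ℝ) (hc : 0 < c) (hx0 : 0 < x) (hxc : x ≤ c) (m : ℕ) :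
    TT c m x ≤ TT c 0 x := by
  induction m with
  | zero => exact le_refl _
  | succ k ih => exact (TT_succ_le c x hc hx0 hxc k).trans ih

theorem g1_double_sided_taylor (c : ℝ) (hc : c ∈ Ioo 0 π)
    (x : ℝ) (hx : x ∈ Ioo 0 c) (m n : ℕ) :
    1 / 4 = T 0 x ∧
    T 0 x ≤ T n x ∧
    T n x ≤ T (n + 1) x ∧
    T (n + 1) x ≤ g1 x ∧
    g1 x ≤ TT c (m + 1) x ∧
    TT c (m + 1) x ≤ TT c m x ∧
    TT c m x ≤ TT c 0 x ∧
    TT c 0 x = g1 c := by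
  obtain ⟨hc0, -⟩ := hc
  obtain ⟨hx0, hxc⟩ := hx
  have hT0 : T 0 x = 1 / 4 := by
    simp [T, acoef, Nat.factorial]
    norm_num
  refine ⟨hT0.symm, ?_, ?_, ?_, ?_, ?_, ?_, ?_⟩
  · exact Finset.sum_le_sum_of_subset_of_nonneg
      (Finset.range_subset_range.2 (by omega)) (fun i _ _ => term_nonneg i x)
  · exact Finset.sum_le_sum_of_subset_of_nonneg
      (Finset.range_subset_range.2 (by omega)) (fun i _ _ => term_nonneg i x)
  · rw [g1_eq_tsum x hx0.ne']
    exact (summable_g1 x).sum_le_tsum _ (fun i _ => term_nonneg i x)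
  · exact g1_le_TT c x hc0 hx0 hxc.le (m + 1)
  · exact TT_succ_le c x hc0 hx0 hxc.le m
  · exact TT_le_zero c x hc0 hx0 hxc.le m
  · simp [TT]
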